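/- Let G be a mixed graph with distinct vertices a, b having no arc between them. Then the degree sequence of the Kelmans transformation G_b^a equals the degree sequence of G if and only if one of the following holds: N⁺(a)∖{b} ⊆ N⁺(b)∖{a} and N⁻(a)∖{b} ⊆ N⁻(b)∖{a}; or N⁺(b)∖{a} ⊆ N⁺(a)∖{b} and N⁻(b)∖{a} ⊆ N⁻(a)∖{b}. Moreover, in that case G_b^a is isomorphic to G. -/

import Mathlib

attribute [local instance] Classical.propDecidable

/-- The spectral radius of a real square matrix: the maximum of the complex moduli
of its eigenvalues (roots of the characteristic polynomial over ℂ). -/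
noncomputable def specRad {m : Type*} [Fintype m] [DecidableEq m] (M : Matrix m m ℝ) : ℝ :=
  sSup {r : ℝ | ∃ μ : ℂ, (M.map (fun x => (x : ℂ))).charpoly.IsRoot μ ∧ r = ‖μ‖}

/-- The `A_α` matrix `α D⁺ + (1-α) A` of a mixed graph given by its adjacency matrix `A`,
where `D⁺` is the diagonal out-degree matrix. -/
noncomputable def Aalpha {n : ℕ} (α : ℝ) (A : Matrix (Fin n) (Fin n) ℝ) :
    Matrix (Fin n) (Fin n) ℝ :=
  α • Matrix.diagonal (fun i => ∑ j, A i j) + (1 - α) • A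

/-- The Kelmans transformation of a mixed graph (given by its 0-1 adjacency matrix)
from `b` to `a`. -/
noncomputable def kelmansG {n : ℕ} (A : Matrix (Fin n) (Fin n) ℝ) (a b : Fin n) :
    Matrix (Fin n) (Fin n) ℝ :=
  Matrix.of fun i j =>
    if i ≠ a ∧ i ≠ b ∧ j = a then max (A i a) (A i b)
    else if i ≠ a ∧ i ≠ b ∧ j = b then min (A i a) (A i b)
    else if i = a ∧ j ≠ a ∧ j ≠ b then max (A a j) (A b j)
    else if i = b ∧ j ≠ a ∧ j ≠ b then min (A a j) (A b j)
    else A i j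

/-- `A` is the adjacency matrix of a mixed graph: a 0-1 matrix with zero diagonal. -/
def IsMixedAdj {n : ℕ} (A : Matrix (Fin n) (Fin n) ℝ) : Prop :=
  (∀ i j, A i j = 0 ∨ A i j = 1) ∧ ∀ i, A i i = 0

/-- The underlying simple graph of a mixed graph: forget orientations. -/
def underlying {n : ℕ} (A : Matrix (Fin n) (Fin n) ℝ) : SimpleGraph (Fin n) where
  Adj u v := u ≠ v ∧ (A u v = 1 ∨ A v u = 1)
  symm := ⟨fun u v ⟨h1, h2⟩ => ⟨h1.symm, h2.symm⟩⟩
  loopless := ⟨fun u h => h.1 rfl⟩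

/-- The graph of undirected edges of a mixed graph (delete all arcs). -/
def undirPart {n : ℕ} (A : Matrix (Fin n) (Fin n) ℝ) : SimpleGraph (Fin n) where
  Adj u v := u ≠ v ∧ A u v = 1 ∧ A v u = 1
  symm := ⟨fun u v ⟨h1, h2, h3⟩ => ⟨h1.symm, h3, h2⟩⟩
  loopless := ⟨fun u h => h.1 rfl⟩

/-- The degree of a vertex of a mixed graph: `|N⁺(u)| + |N⁻(u)|`. -/
noncomputable def mixedDeg {n : ℕ} (A : Matrix (Fin n) (Fin n) ℝ) (u : Fin n) : ℕ :=
  (Finset.univ.filter fun v => A u v = 1).card + (Finset.univ.filter fun v => A v u = 1).card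

/-- The degree sequence of a mixed graph, listed in descending order. -/
noncomputable def degSeq {n : ℕ} (A : Matrix (Fin n) (Fin n) ℝ) : List ℕ :=
  (Multiset.sort (Finset.univ.val.map fun u => mixedDeg A u) (· ≤ ·)).reverse

section helpers
variable {n : ℕ} (A : Matrix (Fin n) (Fin n) ℝ) (a b : Fin n)

lemma kel_aa : kelmansG A a b a a = A a a := by simp [kelmansG]
lemma kel_ab (hab : a ≠ b) : kelmansG A a b a b = A a b := by simp [kelmansG, hab]
lemma kel_ba (hab : a ≠ b) : kelmansG A a b b a = A b a := by simp [kelmansG, hab.symm]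
lemma kel_bb (hab : a ≠ b) : kelmansG A a b b b = A b b := by simp [kelmansG, hab.symm]
lemma kel_as {j : Fin n} (hja : j ≠ a) (hjb : j ≠ b) :
    kelmansG A a b a j = max (A a j) (A b j) := by simp [kelmansG, hja, hjb]
lemma kel_bs (hab : a ≠ b) {j : Fin n} (hja : j ≠ a) (hjb : j ≠ b) :
    kelmansG A a b b j = min (A a j) (A b j) := by simp [kelmansG, hja, hjb, hab.symm]
lemma kel_sa {i : Fin n} (hia : i ≠ a) (hib : i ≠ b) :
    kelmansG A a b i a = max (A i a) (A i b) := by simp [kelmansG, hia, hib]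
lemma kel_sb (hab : a ≠ b) {i : Fin n} (hia : i ≠ a) (hib : i ≠ b) :
    kelmansG A a b i b = min (A i a) (A i b) := by simp [kelmansG, hia, hib, hab.symm]
lemma kel_ss {i j : Fin n} (hia : i ≠ a) (hib : i ≠ b) (hja : j ≠ a) (hjb : j ≠ b) :
    kelmansG A a b i j = A i j := by simp [kelmansG, hia, hib, hja, hjb]

end helpers

lemma zoMax {x y : ℝ} (hx : x = 0 ∨ x = 1) (hy : y = 0 ∨ y = 1) :
    max x y = 0 ∨ max x y = 1 := by
  rcases hx with h | h <;> rcases hy with h' | h' <;> rw [h, h'] <;> norm_num [max_def]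

lemma zoMin {x y : ℝ} (hx : x = 0 ∨ x = 1) (hy : y = 0 ∨ y = 1) :
    min x y = 0 ∨ min x y = 1 := by
  rcases hx with h | h <;> rcases hy with h' | h' <;> rw [h, h'] <;> norm_num [min_def]

lemma card_one_eq_sum {n : ℕ} (f : Fin n → ℝ) (hf : ∀ j, f j = 0 ∨ f j = 1) :
    ((Finset.univ.filter fun v => f v = 1).card : ℝ) = ∑ j, f j := by
  rw [Finset.card_filter]
  push_cast
  exact Finset.sum_congr rfl fun j _ => by rcases hf j with h | h <;> simp [h]

lemma mixedDeg_cast {n : ℕ} (M : Matrix (Fin n) (Fin n) ℝ)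
    (hM : ∀ i j, M i j = 0 ∨ M i j = 1) (u : Fin n) :
    (mixedDeg M u : ℝ) = ∑ j, M u j + ∑ j, M j u := by
  unfold mixedDeg
  push_cast
  rw [card_one_eq_sum (fun j => M u j) (fun j => hM u j),
    card_one_eq_sum (fun j => M j u) (fun j => hM j u)]

lemma degSeq_of_perm {n : ℕ} (A B : Matrix (Fin n) (Fin n) ℝ) (e : Equiv.Perm (Fin n))
    (h : ∀ u v, A u v = B (e u) (e v)) : degSeq B = degSeq A := by
  have hdeg : ∀ u, mixedDeg A u = mixedDeg B (e u) := by
    intro u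
    unfold mixedDeg
    have h1 : (Finset.univ.filter fun v => B (e u) v = 1) =
        (Finset.univ.filter fun v => B (e u) (e v) = 1).image e := by
      ext x
      simp only [Finset.mem_filter, Finset.mem_univ, true_and, Finset.mem_image]
      constructor
      · intro hx; exact ⟨e.symm x, by simpa using hx, by simp⟩
      · rintro ⟨y, hy, rfl⟩; exact hy
    have h2 : (Finset.univ.filter fun v => B v (e u) = 1) =
        (Finset.univ.filter fun v => B (e v) (e u) = 1).image e := by
      ext x
      simp only [Finset.mem_filter, Finset.mem_univ, true_and, Finset.mem_image]
      constructor
      · intro hx; exact ⟨e.symm x, by simpa using hx, by simp⟩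
      · rintro ⟨y, hy, rfl⟩; exact hy
    have e1 : (Finset.univ.filter fun v => A u v = 1) =
        (Finset.univ.filter fun v => B (e u) (e v) = 1) := by
      ext x; simp [h u x]
    have e2 : (Finset.univ.filter fun v => A v u = 1) =
        (Finset.univ.filter fun v => B (e v) (e u) = 1) := by
      ext x; simp [h x u]
    rw [h1, h2, Finset.card_image_of_injective _ e.injective,
      Finset.card_image_of_injective _ e.injective, e1, e2]
  have h4 : Finset.univ.val.map (⇑e) = Finset.univ.val := by
    have := congrArg Finset.val (Finset.map_univ_equiv e)
    rwa [Finset.map_val] at this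
  have hm : (Finset.univ.val.map fun u => mixedDeg B u) =
      Finset.univ.val.map fun u => mixedDeg A u := by
    have h3 : (Finset.univ.val.map fun u => mixedDeg A u) =
        Finset.univ.val.map ((fun u => mixedDeg B u) ∘ e) :=
      Multiset.map_congr rfl fun u _ => hdeg u
    rw [h3, ← Multiset.map_map, h4]
  unfold degSeq
  rw [hm]

/-- `d(G_b^a) = d(G)` iff one of the two neighborhood-containment conditions holds,
and in that case `G_b^a` is isomorphic to `G`. -/
theorem degSeq_kelmansG_eq_iff {n : ℕ} (A : Matrix (Fin n) (Fin n) ℝ) (hA : IsMixedAdj A)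
    (a b : Fin n) (hab : a ≠ b) (hnoarc : A a b = A b a) :
    (degSeq (kelmansG A a b) = degSeq A ↔
      (({v | A a v = 1} \ {b} ⊆ {v | A b v = 1} \ {a} ∧
        {v | A v a = 1} \ {b} ⊆ {v | A v b = 1} \ {a}) ∨
       ({v | A b v = 1} \ {a} ⊆ {v | A a v = 1} \ {b} ∧
        {v | A v b = 1} \ {a} ⊆ {v | A v a = 1} \ {b}))) ∧
    (degSeq (kelmansG A a b) = degSeq A →
      ∃ e : Equiv.Perm (Fin n), ∀ u v, A u v = kelmansG A a b (e u) (e v)) := by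
  obtain ⟨h01, hdg⟩ := hA
  set B := kelmansG A a b with hB
  have hnn : ∀ i j, (0:ℝ) ≤ A i j := by
    intro i j; rcases h01 i j with h | h <;> rw [h] <;> norm_num
  have hB01 : ∀ i j, B i j = 0 ∨ B i j = 1 := by
    intro i j
    rw [hB]
    simp only [kelmansG, Matrix.of_apply]
    split_ifs
    · exact zoMax (h01 i a) (h01 i b)
    · exact zoMin (h01 i a) (h01 i b)
    · exact zoMax (h01 a j) (h01 b j)
    · exact zoMin (h01 a j) (h01 b j)
    · exact h01 i j
  have kaa : B a a = A a a := kel_aa A a b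
  have kab : B a b = A a b := kel_ab A a b hab
  have kba : B b a = A b a := kel_ba A a b hab
  have kbb : B b b = A b b := kel_bb A a b hab
  have kas : ∀ {j : Fin n}, j ≠ a → j ≠ b → B a j = max (A a j) (A b j) :=
    fun hja hjb => kel_as A a b hja hjb
  have kbs : ∀ {j : Fin n}, j ≠ a → j ≠ b → B b j = min (A a j) (A b j) :=
    fun hja hjb => kel_bs A a b hab hja hjb
  have ksa : ∀ {i : Fin n}, i ≠ a → i ≠ b → B i a = max (A i a) (A i b) :=
    fun hia hib => kel_sa A a b hia hib
  have ksb : ∀ {i : Fin n}, i ≠ a → i ≠ b → B i b = min (A i a) (A i b) :=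
    fun hia hib => kel_sb A a b hab hia hib
  have kss : ∀ {i j : Fin n}, i ≠ a → i ≠ b → j ≠ a → j ≠ b → B i j = A i j :=
    fun hia hib hja hjb => kel_ss A a b hia hib hja hjb
  -- the finset of "other" vertices
  set s : Finset (Fin n) := (Finset.univ.erase a).erase b with hs
  have hmem : ∀ j ∈ s, j ≠ a ∧ j ≠ b := by
    intro j hj
    rw [hs, Finset.mem_erase, Finset.mem_erase] at hj
    exact ⟨hj.2.1, hj.1⟩
  have hmem' : ∀ j, j ≠ a → j ≠ b → j ∈ s := by
    intro j hja hjb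
    rw [hs, Finset.mem_erase, Finset.mem_erase]
    exact ⟨hjb, hja, Finset.mem_univ j⟩
  have hsplit : ∀ g : Fin n → ℝ, ∑ j, g j = (∑ j ∈ s, g j) + g b + g a := by
    intro g
    rw [← Finset.sum_erase_add Finset.univ g (Finset.mem_univ a),
      ← Finset.sum_erase_add (Finset.univ.erase a) g
        (Finset.mem_erase.2 ⟨Ne.symm hab, Finset.mem_univ b⟩)]
  -- degree formulas
  have hdAa : (mixedDeg A a : ℝ) =
      ((∑ j ∈ s, A a j) + ∑ j ∈ s, A j a) + (A a b + A b a) := by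
    rw [mixedDeg_cast A h01, hsplit (fun j => A a j), hsplit (fun j => A j a), hdg a]; ring
  have hdAb : (mixedDeg A b : ℝ) =
      ((∑ j ∈ s, A b j) + ∑ j ∈ s, A j b) + (A a b + A b a) := by
    rw [mixedDeg_cast A h01, hsplit (fun j => A b j), hsplit (fun j => A j b), hdg b]; ring
  have hdBa : (mixedDeg B a : ℝ) =
      ((∑ j ∈ s, max (A a j) (A b j)) + ∑ j ∈ s, max (A j a) (A j b)) + (A a b + A b a) := by
    rw [mixedDeg_cast B hB01, hsplit (fun j => B a j), hsplit (fun j => B j a)]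
    have e1 : ∑ j ∈ s, B a j = ∑ j ∈ s, max (A a j) (A b j) :=
      Finset.sum_congr rfl fun j hj => kel_as A a b (hmem j hj).1 (hmem j hj).2
    have e2 : ∑ j ∈ s, B j a = ∑ j ∈ s, max (A j a) (A j b) :=
      Finset.sum_congr rfl fun j hj => kel_sa A a b (hmem j hj).1 (hmem j hj).2
    rw [e1, e2, kab, kba, kaa, hdg a]; ring
  have hdBb : (mixedDeg B b : ℝ) =
      ((∑ j ∈ s, min (A a j) (A b j)) + ∑ j ∈ s, min (A j a) (A j b)) + (A a b + A b a) := by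
    rw [mixedDeg_cast B hB01, hsplit (fun j => B b j), hsplit (fun j => B j b)]
    have e1 : ∑ j ∈ s, B b j = ∑ j ∈ s, min (A a j) (A b j) :=
      Finset.sum_congr rfl fun j hj => kel_bs A a b hab (hmem j hj).1 (hmem j hj).2
    have e2 : ∑ j ∈ s, B j b = ∑ j ∈ s, min (A j a) (A j b) :=
      Finset.sum_congr rfl fun j hj => kel_sb A a b hab (hmem j hj).1 (hmem j hj).2
    rw [e1, e2, kab, kba, kbb, hdg b]; ring
  have hsame : ∀ u, u ≠ a → u ≠ b → mixedDeg B u = mixedDeg A u := by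
    intro u hua hub
    have hr : (mixedDeg B u : ℝ) = (mixedDeg A u : ℝ) := by
      rw [mixedDeg_cast B hB01, mixedDeg_cast A h01,
        hsplit (fun j => B u j), hsplit (fun j => B j u),
        hsplit (fun j => A u j), hsplit (fun j => A j u)]
      have e1 : ∑ j ∈ s, B u j = ∑ j ∈ s, A u j :=
        Finset.sum_congr rfl fun j hj =>
          kel_ss A a b hua hub (hmem j hj).1 (hmem j hj).2
      have e2 : ∑ j ∈ s, B j u = ∑ j ∈ s, A j u :=
        Finset.sum_congr rfl fun j hj =>
          kel_ss A a b (hmem j hj).1 (hmem j hj).2 hua hub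
      rw [e1, e2, ksa hua hub, ksb hua hub, kas hua hub, kbs hua hub]
      have m1 := max_add_min (A u a) (A u b)
      have m2 := max_add_min (A a u) (A b u)
      linarith
    exact_mod_cast hr
  -- forward direction
  have hforward : degSeq B = degSeq A →
      (({v | A a v = 1} \ {b} ⊆ {v | A b v = 1} \ {a} ∧
        {v | A v a = 1} \ {b} ⊆ {v | A v b = 1} \ {a}) ∨
       ({v | A b v = 1} \ {a} ⊆ {v | A a v = 1} \ {b} ∧
        {v | A v b = 1} \ {a} ⊆ {v | A v a = 1} \ {b})) := by
    intro hq
    -- multiset equality of degree sequences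
    have hmulti : (Finset.univ.val.map fun u => mixedDeg B u) =
        Finset.univ.val.map fun u => mixedDeg A u := by
      unfold degSeq at hq
      have h1 := List.reverse_injective hq
      have h2 := congrArg (fun l : List ℕ => (l : Multiset ℕ)) h1
      simpa only [Multiset.sort_eq] using h2
    have hb' : b ∈ Finset.univ.val.erase a :=
      (Multiset.mem_erase_of_ne (Ne.symm hab)).2 (Finset.mem_univ b)
    have hcons : Finset.univ.val = a ::ₘ b ::ₘ s.val := by
      rw [hs, Finset.erase_val, Finset.erase_val,
        Multiset.cons_erase hb', Multiset.cons_erase (Finset.mem_univ a)]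
    rw [hcons] at hmulti
    simp only [Multiset.map_cons] at hmulti
    have hrest : s.val.map (fun u => mixedDeg B u) = s.val.map fun u => mixedDeg A u :=
      Multiset.map_congr rfl fun j hj => hsame j (hmem j hj).1 (hmem j hj).2
    rw [hrest] at hmulti
    have hpair : (mixedDeg B a ::ₘ {mixedDeg B b} : Multiset ℕ) =
        mixedDeg A a ::ₘ {mixedDeg A b} := by
      have h2 : (mixedDeg B a ::ₘ {mixedDeg B b} : Multiset ℕ) +
          s.val.map (fun u => mixedDeg A u) =
          (mixedDeg A a ::ₘ {mixedDeg A b}) + s.val.map (fun u => mixedDeg A u) := by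
        simpa [Multiset.cons_add, Multiset.singleton_add] using hmulti
      exact add_right_cancel h2
    have hcase : mixedDeg B a = mixedDeg A a ∨ mixedDeg B a = mixedDeg A b := by
      have : mixedDeg B a ∈ (mixedDeg A a ::ₘ {mixedDeg A b} : Multiset ℕ) :=
        hpair ▸ Multiset.mem_cons_self _ _
      simpa using this
    rcases hcase with hc | hc
    · -- degrees of a preserved: N(b) ⊆ N(a), right disjunct
      right
      have hcr : (mixedDeg B a : ℝ) = (mixedDeg A a : ℝ) := by exact_mod_cast hc
      rw [hdBa, hdAa] at hcr
      have hsum : ∑ j ∈ s, ((max (A a j) (A b j) - A a j) +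
          (max (A j a) (A j b) - A j a)) = 0 := by
        rw [Finset.sum_add_distrib, Finset.sum_sub_distrib, Finset.sum_sub_distrib]
        linarith
      have hkey := (Finset.sum_eq_zero_iff_of_nonneg (fun j _ => by
        have := le_max_left (A a j) (A b j)
        have := le_max_left (A j a) (A j b)
        linarith)).1 hsum
      have hout : ∀ j ∈ s, A b j ≤ A a j := by
        intro j hj
        have h0 := hkey j hj
        have := le_max_left (A a j) (A b j)
        have := le_max_left (A j a) (A j b)
        have := le_max_right (A a j) (A b j)
        linarith
      have hin : ∀ j ∈ s, A j b ≤ A j a := by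
        intro j hj
        have h0 := hkey j hj
        have := le_max_left (A a j) (A b j)
        have := le_max_left (A j a) (A j b)
        have := le_max_right (A j a) (A j b)
        linarith
      constructor
      · intro v hv
        simp only [Set.mem_diff, Set.mem_setOf_eq, Set.mem_singleton_iff] at hv ⊢
        obtain ⟨hv1, hva⟩ := hv
        have hvb : v ≠ b := fun h => by rw [h, hdg b] at hv1; norm_num at hv1
        have hle := hout v (hmem' v hva hvb)
        rw [hv1] at hle
        rcases h01 a v with h | h
        · rw [h] at hle; norm_num at hle
        · exact ⟨h, hvb⟩
      · intro v hv
        simp only [Set.mem_diff, Set.mem_setOf_eq, Set.mem_singleton_iff] at hv ⊢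
        obtain ⟨hv1, hva⟩ := hv
        have hvb : v ≠ b := fun h => by rw [h, hdg b] at hv1; norm_num at hv1
        have hle := hin v (hmem' v hva hvb)
        rw [hv1] at hle
        rcases h01 v a with h | h
        · rw [h] at hle; norm_num at hle
        · exact ⟨h, hvb⟩
    · -- degree of a becomes degree of b: N(a) ⊆ N(b), left disjunct
      left
      have hcr : (mixedDeg B a : ℝ) = (mixedDeg A b : ℝ) := by exact_mod_cast hc
      rw [hdBa, hdAb] at hcr
      have hsum : ∑ j ∈ s, ((max (A a j) (A b j) - A b j) +
          (max (A j a) (A j b) - A j b)) = 0 := by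
        rw [Finset.sum_add_distrib, Finset.sum_sub_distrib, Finset.sum_sub_distrib]
        linarith
      have hkey := (Finset.sum_eq_zero_iff_of_nonneg (fun j _ => by
        have := le_max_right (A a j) (A b j)
        have := le_max_right (A j a) (A j b)
        linarith)).1 hsum
      have hout : ∀ j ∈ s, A a j ≤ A b j := by
        intro j hj
        have h0 := hkey j hj
        have := le_max_right (A a j) (A b j)
        have := le_max_right (A j a) (A j b)
        have := le_max_left (A a j) (A b j)
        linarith
      have hin : ∀ j ∈ s, A j a ≤ A j b := by
        intro j hj
        have h0 := hkey j hj
        have := le_max_right (A a j) (A b j)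
        have := le_max_right (A j a) (A j b)
        have := le_max_left (A j a) (A j b)
        linarith
      constructor
      · intro v hv
        simp only [Set.mem_diff, Set.mem_setOf_eq, Set.mem_singleton_iff] at hv ⊢
        obtain ⟨hv1, hvb⟩ := hv
        have hva : v ≠ a := fun h => by rw [h, hdg a] at hv1; norm_num at hv1
        have hle := hout v (hmem' v hva hvb)
        rw [hv1] at hle
        rcases h01 b v with h | h
        · rw [h] at hle; norm_num at hle
        · exact ⟨h, hva⟩
      · intro v hv
        simp only [Set.mem_diff, Set.mem_setOf_eq, Set.mem_singleton_iff] at hv ⊢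
        obtain ⟨hv1, hvb⟩ := hv
        have hva : v ≠ a := fun h => by rw [h, hdg a] at hv1; norm_num at hv1
        have hle := hin v (hmem' v hva hvb)
        rw [hv1] at hle
        rcases h01 v b with h | h
        · rw [h] at hle; norm_num at hle
        · exact ⟨h, hva⟩
  -- backward: condition yields a permutation
  have hback : (({v | A a v = 1} \ {b} ⊆ {v | A b v = 1} \ {a} ∧
        {v | A v a = 1} \ {b} ⊆ {v | A v b = 1} \ {a}) ∨
       ({v | A b v = 1} \ {a} ⊆ {v | A a v = 1} \ {b} ∧
        {v | A v b = 1} \ {a} ⊆ {v | A v a = 1} \ {b})) →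
      ∃ e : Equiv.Perm (Fin n), ∀ u v, A u v = B (e u) (e v) := by
    rintro (⟨h1, h2⟩ | ⟨h1, h2⟩)
    · -- N(a) ⊆ N(b): swap a b
      have hle_out : ∀ v, v ≠ a → v ≠ b → A a v ≤ A b v := by
        intro v hva hvb
        rcases h01 a v with h | h
        · rw [h]; exact hnn b v
        · have : v ∈ ({v | A b v = 1} \ {a} : Set (Fin n)) := h1 ⟨h, hvb⟩
          rw [h, this.1]
      have hle_in : ∀ v, v ≠ a → v ≠ b → A v a ≤ A v b := by
        intro v hva hvb
        rcases h01 v a with h | h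
        · rw [h]; exact hnn v b
        · have : v ∈ ({v | A v b = 1} \ {a} : Set (Fin n)) := h2 ⟨h, hvb⟩
          rw [h, this.1]
      refine ⟨Equiv.swap a b, fun u v => ?_⟩
      by_cases hua : u = a
      · rw [hua]
        rw [Equiv.swap_apply_left]
        by_cases hva : v = a
        · rw [hva]; rw [Equiv.swap_apply_left, kbb, hdg, hdg]
        · by_cases hvb : v = b
          · rw [hvb]; rw [Equiv.swap_apply_right, kba, ← hnoarc]
          · rw [Equiv.swap_apply_of_ne_of_ne hva hvb, kbs hva hvb,
              min_eq_left (hle_out v hva hvb)]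
      · by_cases hub : u = b
        · rw [hub]
          rw [Equiv.swap_apply_right]
          by_cases hva : v = a
          · rw [hva]; rw [Equiv.swap_apply_left, kab, hnoarc]
          · by_cases hvb : v = b
            · rw [hvb]; rw [Equiv.swap_apply_right, kaa, hdg, hdg]
            · rw [Equiv.swap_apply_of_ne_of_ne hva hvb, kas hva hvb,
                max_eq_right (hle_out v hva hvb)]
        · rw [Equiv.swap_apply_of_ne_of_ne hua hub]
          by_cases hva : v = a
          · rw [hva]
            rw [Equiv.swap_apply_left, ksb hua hub,
              min_eq_left (hle_in u hua hub)]
          · by_cases hvb : v = b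
            · rw [hvb]
              rw [Equiv.swap_apply_right, ksa hua hub,
                max_eq_right (hle_in u hua hub)]
            · rw [Equiv.swap_apply_of_ne_of_ne hva hvb, kss hua hub hva hvb]
    · -- N(b) ⊆ N(a): identity
      have hle_out : ∀ v, v ≠ a → v ≠ b → A b v ≤ A a v := by
        intro v hva hvb
        rcases h01 b v with h | h
        · rw [h]; exact hnn a v
        · have : v ∈ ({v | A a v = 1} \ {b} : Set (Fin n)) := h1 ⟨h, hva⟩
          rw [h, this.1]
      have hle_in : ∀ v, v ≠ a → v ≠ b → A v b ≤ A v a := by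
        intro v hva hvb
        rcases h01 v b with h | h
        · rw [h]; exact hnn v a
        · have : v ∈ ({v | A v a = 1} \ {b} : Set (Fin n)) := h2 ⟨h, hva⟩
          rw [h, this.1]
      refine ⟨Equiv.refl _, fun u v => ?_⟩
      simp only [Equiv.refl_apply]
      by_cases hua : u = a
      · rw [hua]
        by_cases hva : v = a
        · rw [hva]; rw [kaa]
        · by_cases hvb : v = b
          · rw [hvb]; rw [kab]
          · rw [kas hva hvb, max_eq_left (hle_out v hva hvb)]
      · by_cases hub : u = b
        · rw [hub]
          by_cases hva : v = a
          · rw [hva]; rw [kba]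
          · by_cases hvb : v = b
            · rw [hvb]; rw [kbb]
            · rw [kbs hva hvb, min_eq_right (hle_out v hva hvb)]
        · by_cases hva : v = a
          · rw [hva]; rw [ksa hua hub, max_eq_left (hle_in u hua hub)]
          · by_cases hvb : v = b
            · rw [hvb]; rw [ksb hua hub, min_eq_right (hle_in u hua hub)]
            · rw [kss hua hub hva hvb]
  refine ⟨⟨hforward, fun hc => ?_⟩, fun hq => hback (hforward hq)⟩
  obtain ⟨e, he⟩ := hback hc
  exact degSeq_of_perm A B e he
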